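/- arXiv:2508.08716 — 6 statements merged into one kernel-verified Lean document; each statement's English description precedes it below -/
import Mathlib

section
/- For all vectors a, b in ℝ^n and real p ≥ 2, one has the lower bound ⟨|b|^{p-2} b − |a|^{p-2} a, b − a⟩ ≥ (4/p²) · ‖ |b|^{(p-2)/2} b − |a|^{(p-2)/2} a ‖². -/
open scoped RealInnerProductSpace

private lemma rpow_sq_eq {x : ℝ} (hx : 0 ≤ x) (q : ℝ) : (x ^ q) ^ 2 = x ^ (2 * q) := by
  rw [← Real.rpow_natCast (x ^ q) 2, ← Real.rpow_mul hx]
  ring_nf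

private lemma rpow_mul_self {x : ℝ} (hx : 0 ≤ x) {q : ℝ} (hq : 0 < q + 1) :
    x ^ q * x = x ^ (q + 1) := by
  rcases hx.eq_or_lt with rfl | hx'
  · rw [Real.zero_rpow hq.ne', mul_zero]
  · rw [Real.rpow_add hx', Real.rpow_one]

/-- One-dimensional core inequality, in the case `β ≤ α`. -/
private lemma oneD_aux (p : ℝ) (hp : 2 ≤ p) {α β : ℝ} (hβ : 0 ≤ β) (hβα : β ≤ α) :
    4 / p ^ 2 * (α ^ (p / 2) - β ^ (p / 2)) ^ 2 ≤ (α ^ (p - 1) - β ^ (p - 1)) * (α - β) := by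
  have hp0 : (0:ℝ) < p := by linarith
  have hα : 0 ≤ α := hβ.trans hβα
  rcases hα.eq_or_lt with rfl | hα'
  · have hβ0 : β = 0 := le_antisymm hβα hβ
    subst hβ0
    simp
  -- D := α^(p/2) - β^(p/2) ≥ 0
  set D : ℝ := α ^ (p / 2) - β ^ (p / 2) with hD
  have hDpos : 0 ≤ D := by
    have := Real.rpow_le_rpow hβ hβα (by positivity : (0:ℝ) ≤ p / 2)
    simpa [hD] using this
  -- step (i): α^(p/2-1) * D ≤ α^(p-1) - β^(p-1)
  have hi : α ^ (p / 2 - 1) * D ≤ α ^ (p - 1) - β ^ (p - 1) := by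
    have h1 : α ^ (p / 2 - 1) * α ^ (p / 2) = α ^ (p - 1) := by
      rw [← Real.rpow_add hα']; ring_nf
    have h2 : β ^ (p - 1) ≤ α ^ (p / 2 - 1) * β ^ (p / 2) := by
      rcases hβ.eq_or_lt with rfl | hβ'
      · have : (0:ℝ) ^ (p - 1) = 0 := Real.zero_rpow (by linarith)
        rw [this]; positivity
      · have h3 : β ^ (p - 1) = β ^ (p / 2 - 1) * β ^ (p / 2) := by
          rw [← Real.rpow_add hβ']; ring_nf
        rw [h3]
        have : β ^ (p / 2 - 1) ≤ α ^ (p / 2 - 1) :=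
          Real.rpow_le_rpow hβ hβα (by linarith)
        exact mul_le_mul_of_nonneg_right this (by positivity)
    calc α ^ (p / 2 - 1) * D
        = α ^ (p / 2 - 1) * α ^ (p / 2) - α ^ (p / 2 - 1) * β ^ (p / 2) := by ring
      _ ≤ α ^ (p - 1) - β ^ (p - 1) := by rw [h1]; linarith
  -- step (ii): (2/p) * α^(1 - p/2) * D ≤ α - β   (from Bernoulli)
  have hii : 2 / p * α ^ (1 - p / 2) * D ≤ α - β := by
    -- Bernoulli with 1 + s = β/α
    have hs : -1 ≤ β / α - 1 := by
      have : 0 ≤ β / α := by positivity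
      linarith
    have hber := one_add_mul_self_le_rpow_one_add hs (by linarith : (1:ℝ) ≤ p / 2)
    have hba : (1 + (β / α - 1)) ^ (p / 2) = β ^ (p / 2) / α ^ (p / 2) := by
      rw [show 1 + (β / α - 1) = β / α by ring, Real.div_rpow hβ hα]
    rw [hba] at hber
    -- multiply by α^(p/2) > 0
    have hαp : (0:ℝ) < α ^ (p / 2) := Real.rpow_pos_of_pos hα' _
    have key : α ^ (p / 2) + p / 2 * (β - α) * α ^ (p / 2 - 1) ≤ β ^ (p / 2) := by
      have := mul_le_mul_of_nonneg_right hber hαp.le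
      have hsplit : (1 + p / 2 * (β / α - 1)) * α ^ (p / 2)
          = α ^ (p / 2) + p / 2 * (β - α) * (α ^ (p / 2) / α) := by
        field_simp
      have hdiv : α ^ (p / 2) / α = α ^ (p / 2 - 1) := by
        rw [Real.rpow_sub hα', Real.rpow_one]
      rw [hsplit, hdiv] at this
      calc α ^ (p / 2) + p / 2 * (β - α) * α ^ (p / 2 - 1)
          ≤ β ^ (p / 2) / α ^ (p / 2) * α ^ (p / 2) := this
        _ = β ^ (p / 2) := by field_simp
    -- so D ≤ (p/2) * α^(p/2-1) * (α - β)
    have hD2 : D ≤ p / 2 * α ^ (p / 2 - 1) * (α - β) := by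
      have : α ^ (p / 2) - β ^ (p / 2) ≤ p / 2 * (α - β) * α ^ (p / 2 - 1) := by linarith
      calc D ≤ p / 2 * (α - β) * α ^ (p / 2 - 1) := this
        _ = p / 2 * α ^ (p / 2 - 1) * (α - β) := by ring
    have hmul := mul_le_mul_of_nonneg_left hD2 (by positivity : (0:ℝ) ≤ 2 / p * α ^ (1 - p / 2))
    have hcanc : 2 / p * α ^ (1 - p / 2) * (p / 2 * α ^ (p / 2 - 1) * (α - β)) = α - β := by
      have h0 : α ^ (1 - p / 2) * α ^ (p / 2 - 1) = 1 := by
        rw [← Real.rpow_add hα']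
        norm_num
      calc 2 / p * α ^ (1 - p / 2) * (p / 2 * α ^ (p / 2 - 1) * (α - β))
          = (2 / p * (p / 2)) * (α ^ (1 - p / 2) * α ^ (p / 2 - 1)) * (α - β) := by ring
        _ = α - β := by rw [h0]; field_simp
    calc 2 / p * α ^ (1 - p / 2) * D
        ≤ 2 / p * α ^ (1 - p / 2) * (p / 2 * α ^ (p / 2 - 1) * (α - β)) := hmul
      _ = α - β := hcanc
  -- combine
  have hc1 : 0 ≤ α ^ (p / 2 - 1) * D := by positivity
  have hAB : α ^ (p / 2 - 1) * D * (2 / p * α ^ (1 - p / 2) * D)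
      ≤ (α ^ (p - 1) - β ^ (p - 1)) * (α - β) := by
    have hB : 0 ≤ α - β := by linarith
    have h1 : α ^ (p / 2 - 1) * D * (2 / p * α ^ (1 - p / 2) * D)
        ≤ α ^ (p / 2 - 1) * D * (α - β) := mul_le_mul_of_nonneg_left hii hc1
    have h2 : α ^ (p / 2 - 1) * D * (α - β) ≤ (α ^ (p - 1) - β ^ (p - 1)) * (α - β) :=
      mul_le_mul_of_nonneg_right hi hB
    linarith
  have hval : α ^ (p / 2 - 1) * D * (2 / p * α ^ (1 - p / 2) * D) = 2 / p * D ^ 2 := by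
    have h0 : α ^ (p / 2 - 1) * α ^ (1 - p / 2) = 1 := by
      rw [← Real.rpow_add hα']; norm_num
    calc α ^ (p / 2 - 1) * D * (2 / p * α ^ (1 - p / 2) * D)
        = 2 / p * (α ^ (p / 2 - 1) * α ^ (1 - p / 2)) * D ^ 2 := by ring
      _ = 2 / p * D ^ 2 := by rw [h0]; ring
  have hfinal : 4 / p ^ 2 * D ^ 2 ≤ 2 / p * D ^ 2 := by
    have hcoef : 4 / p ^ 2 ≤ 2 / p := by
      rw [div_le_div_iff₀ (by positivity) hp0]
      nlinarith
    exact mul_le_mul_of_nonneg_right hcoef (by positivity)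
  calc 4 / p ^ 2 * D ^ 2 ≤ 2 / p * D ^ 2 := hfinal
    _ = α ^ (p / 2 - 1) * D * (2 / p * α ^ (1 - p / 2) * D) := hval.symm
    _ ≤ (α ^ (p - 1) - β ^ (p - 1)) * (α - β) := hAB

private lemma oneD (p : ℝ) (hp : 2 ≤ p) {α β : ℝ} (hα : 0 ≤ α) (hβ : 0 ≤ β) :
    4 / p ^ 2 * (α ^ (p / 2) - β ^ (p / 2)) ^ 2 ≤ (α ^ (p - 1) - β ^ (p - 1)) * (α - β) := by
  rcases le_total β α with h | h
  · exact oneD_aux p hp hβ h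
  · have := oneD_aux p hp hα h
    have e1 : (β ^ (p / 2) - α ^ (p / 2)) ^ 2 = (α ^ (p / 2) - β ^ (p / 2)) ^ 2 := by ring
    have e2 : (β ^ (p - 1) - α ^ (p - 1)) * (β - α)
        = (α ^ (p - 1) - β ^ (p - 1)) * (α - β) := by ring
    rw [e1, e2] at this
    exact this

/-- Scalar reduction of the main inequality. -/
private lemma scalar_ineq (p : ℝ) (hp : 2 ≤ p) {α β γ : ℝ} (hα : 0 ≤ α) (hβ : 0 ≤ β)
    (hγ : γ ≤ α * β) :
    4 / p ^ 2 * (α ^ p + β ^ p - 2 * (α ^ ((p - 2) / 2) * β ^ ((p - 2) / 2)) * γ)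
      ≤ α ^ p + β ^ p - (α ^ (p - 2) + β ^ (p - 2)) * γ := by
  have hp0 : (0:ℝ) < p := by linarith
  set u : ℝ := α ^ ((p - 2) / 2) with hu
  set v : ℝ := β ^ ((p - 2) / 2) with hv
  have hu0 : 0 ≤ u := Real.rpow_nonneg hα _
  have hv0 : 0 ≤ v := Real.rpow_nonneg hβ _
  clear_value u v
  have hu2 : u ^ 2 = α ^ (p - 2) := by rw [hu, rpow_sq_eq hα]; ring_nf
  have hv2 : v ^ 2 = β ^ (p - 2) := by rw [hv, rpow_sq_eq hβ]; ring_nf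
  -- K ≥ 0 : slope coefficient
  have hK : 2 * (4 / p ^ 2) * (u * v) ≤ α ^ (p - 2) + β ^ (p - 2) := by
    rw [← hu2, ← hv2]
    have h1 : 2 * (4 / p ^ 2) ≤ 2 := by
      have : 4 / p ^ 2 ≤ 1 := by
        rw [div_le_one (by positivity)]
        nlinarith
      linarith
    nlinarith [sq_nonneg (u - v), mul_nonneg hu0 hv0]
  -- value at γ = α * β
  have hval : 4 / p ^ 2 * (α ^ p + β ^ p - 2 * (u * v) * (α * β))
      ≤ α ^ p + β ^ p - (α ^ (p - 2) + β ^ (p - 2)) * (α * β) := by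
    have huα : u * α = α ^ (p / 2) := by
      rw [hu, rpow_mul_self hα (by linarith : (0:ℝ) < (p - 2) / 2 + 1)]
      ring_nf
    have hvβ : v * β = β ^ (p / 2) := by
      rw [hv, rpow_mul_self hβ (by linarith : (0:ℝ) < (p - 2) / 2 + 1)]
      ring_nf
    have hαp1 : α ^ (p - 2) * α = α ^ (p - 1) := by
      rw [rpow_mul_self hα (by linarith : (0:ℝ) < p - 2 + 1)]; ring_nf
    have hβp1 : β ^ (p - 2) * β = β ^ (p - 1) := by
      rw [rpow_mul_self hβ (by linarith : (0:ℝ) < p - 2 + 1)]; ring_nf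
    have hαp : α ^ (p - 1) * α = α ^ p := by
      rw [rpow_mul_self hα (by linarith : (0:ℝ) < p - 1 + 1)]; ring_nf
    have hβp : β ^ (p - 1) * β = β ^ p := by
      rw [rpow_mul_self hβ (by linarith : (0:ℝ) < p - 1 + 1)]; ring_nf
    have hαsq : α ^ p = (α ^ (p / 2)) ^ 2 := by rw [rpow_sq_eq hα]; ring_nf
    have hβsq : β ^ p = (β ^ (p / 2)) ^ 2 := by rw [rpow_sq_eq hβ]; ring_nf
    have hone := oneD p hp hα hβ
    -- rewrite everything
    have lhs_eq : α ^ p + β ^ p - 2 * (u * v) * (α * β)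
        = (α ^ (p / 2) - β ^ (p / 2)) ^ 2 := by
      rw [hαsq, hβsq, ← huα, ← hvβ]; ring
    have rhs_eq : α ^ p + β ^ p - (α ^ (p - 2) + β ^ (p - 2)) * (α * β)
        = (α ^ (p - 1) - β ^ (p - 1)) * (α - β) := by
      rw [← hαp, ← hβp, ← hαp1, ← hβp1]; ring
    rw [lhs_eq, rhs_eq]
    exact hone
  -- linear in γ with nonpositive slope, γ ≤ αβ
  have hcoef : 0 ≤ (α ^ (p - 2) + β ^ (p - 2)) - 2 * (4 / p ^ 2) * (u * v) := by linarith
  have h := mul_le_mul_of_nonneg_left hγ hcoef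
  have h' : (α ^ (p - 2) + β ^ (p - 2)) * γ - 2 * (4 / p ^ 2) * (u * v) * γ
      ≤ (α ^ (p - 2) + β ^ (p - 2)) * (α * β) - 2 * (4 / p ^ 2) * (u * v) * (α * β) := by
    linear_combination h
  linarith [hval, h']

/-- `⟨|b|^{p-2} b − |a|^{p-2} a, b − a⟩ ≥ (4/p²) ‖|b|^{(p-2)/2} b − |a|^{(p-2)/2} a‖²` for `p ≥ 2`. -/
theorem strong_monotonicity_half_powers {n : ℕ} (p : ℝ) (hp : 2 ≤ p)
    (a b : EuclideanSpace ℝ (Fin n)) :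
    (4 / p ^ 2) * ‖‖b‖ ^ ((p - 2) / 2) • b - ‖a‖ ^ ((p - 2) / 2) • a‖ ^ 2 ≤
      ⟪‖b‖ ^ (p - 2) • b - ‖a‖ ^ (p - 2) • a, b - a⟫ := by
  have hα : (0:ℝ) ≤ ‖a‖ := norm_nonneg a
  have hβ : (0:ℝ) ≤ ‖b‖ := norm_nonneg b
  have hinner : ⟪‖b‖ ^ (p - 2) • b - ‖a‖ ^ (p - 2) • a, b - a⟫
      = ‖b‖ ^ (p - 2) * ‖b‖ ^ 2 + ‖a‖ ^ (p - 2) * ‖a‖ ^ 2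
        - (‖a‖ ^ (p - 2) + ‖b‖ ^ (p - 2)) * ⟪a, b⟫ := by
    rw [inner_sub_left, inner_sub_right, inner_sub_right, real_inner_smul_left,
      real_inner_smul_left, real_inner_smul_left, real_inner_smul_left,
      real_inner_self_eq_norm_sq, real_inner_self_eq_norm_sq, real_inner_comm b a]
    ring
  have hnorm : ‖‖b‖ ^ ((p - 2) / 2) • b - ‖a‖ ^ ((p - 2) / 2) • a‖ ^ 2
      = (‖b‖ ^ ((p - 2) / 2) * ‖b‖) ^ 2
        - 2 * (‖a‖ ^ ((p - 2) / 2) * ‖b‖ ^ ((p - 2) / 2)) * ⟪a, b⟫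
        + (‖a‖ ^ ((p - 2) / 2) * ‖a‖) ^ 2 := by
    rw [norm_sub_sq_real, real_inner_smul_left, real_inner_smul_right, norm_smul, norm_smul,
      Real.norm_eq_abs, Real.norm_eq_abs,
      abs_of_nonneg (Real.rpow_nonneg hβ ((p - 2) / 2)),
      abs_of_nonneg (Real.rpow_nonneg hα ((p - 2) / 2)), real_inner_comm b a]
    ring
  have hβ2 : ‖b‖ ^ (p - 2) * ‖b‖ ^ 2 = ‖b‖ ^ p := by
    have h2 : (‖b‖:ℝ) ^ (2:ℕ) = ‖b‖ * ‖b‖ := sq ‖b‖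
    rw [h2, ← mul_assoc, rpow_mul_self hβ (by linarith : (0:ℝ) < p - 2 + 1),
      rpow_mul_self hβ (by linarith : (0:ℝ) < p - 2 + 1 + 1)]
    ring_nf
  have hα2 : ‖a‖ ^ (p - 2) * ‖a‖ ^ 2 = ‖a‖ ^ p := by
    have h2 : (‖a‖:ℝ) ^ (2:ℕ) = ‖a‖ * ‖a‖ := sq ‖a‖
    rw [h2, ← mul_assoc, rpow_mul_self hα (by linarith : (0:ℝ) < p - 2 + 1),
      rpow_mul_self hα (by linarith : (0:ℝ) < p - 2 + 1 + 1)]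
    ring_nf
  have hβt : (‖b‖ ^ ((p - 2) / 2) * ‖b‖) ^ 2 = ‖b‖ ^ p := by
    rw [rpow_mul_self hβ (by linarith : (0:ℝ) < (p - 2) / 2 + 1), rpow_sq_eq hβ]
    ring_nf
  have hαt : (‖a‖ ^ ((p - 2) / 2) * ‖a‖) ^ 2 = ‖a‖ ^ p := by
    rw [rpow_mul_self hα (by linarith : (0:ℝ) < (p - 2) / 2 + 1), rpow_sq_eq hα]
    ring_nf
  have key := scalar_ineq p hp hα hβ (real_inner_le_norm a b)
  rw [hinner, hnorm, hβ2, hα2, hβt, hαt]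
  linarith [key]
end

section
/- For all vectors a, b in ℝ^n and real p ≥ 2, one has 2^{2−p} ‖b − a‖^p ≤ ⟨|b|^{p-2} b − |a|^{p-2} a, b − a⟩. -/
open scoped RealInnerProductSpace NNReal

open Set

private lemma rpow_split {x : ℝ} (hx : 0 ≤ x) {q : ℝ} (hq : 0 ≤ q) :
    x ^ (q + 1) = x ^ q * x := by
  rw [Real.rpow_add_of_nonneg hx hq zero_le_one, Real.rpow_one]

private lemma sq_rpow {x : ℝ} (hx : 0 ≤ x) (p : ℝ) : (x ^ 2) ^ (p / 2) = x ^ p := by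
  rw [← Real.rpow_natCast x 2, ← Real.rpow_mul hx]
  congr 1
  push_cast
  ring

private lemma rpow_superadd {q : ℝ} (hq : 1 ≤ q) {x y : ℝ} (hx : 0 ≤ x) (hy : 0 ≤ y) :
    x ^ q + y ^ q ≤ (x + y) ^ q := by
  have := NNReal.add_rpow_le_rpow_add x.toNNReal y.toNNReal hq
  have h2 := NNReal.coe_le_coe.2 this
  simpa [NNReal.coe_rpow, Real.coe_toNNReal _ hx, Real.coe_toNNReal _ hy] using h2

private lemma endpoint1 {p A B : ℝ} (hp : 2 ≤ p) (hA : 0 ≤ A) (hB : 0 ≤ B) :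
    (2:ℝ) ^ (2 - p) * (A + B) ^ p ≤ A ^ p + B ^ p + (A ^ (p-2) + B ^ (p-2)) * (A*B) := by
  have hAB : 0 ≤ A + B := by linarith
  have hconv := (convexOn_rpow (by linarith : (1:ℝ) ≤ p - 1)).2
    (mem_Ici.2 hA) (mem_Ici.2 hB) (by norm_num : (0:ℝ) ≤ 1/2) (by norm_num : (0:ℝ) ≤ 1/2)
    (by norm_num)
  simp only [smul_eq_mul] at hconv
  have hhalf : ((A+B)/2) ^ (p-1) = (A+B)^(p-1) / 2^(p-1) :=
    Real.div_rpow hAB (by norm_num : (0:ℝ) ≤ 2) (p-1)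
  have h1 : (A+B)^(p-1) / 2^(p-1) ≤ 1/2 * A^(p-1) + 1/2 * B^(p-1) := by
    rw [← hhalf, show (A+B)/2 = 1/2*A + 1/2*B by ring]
    exact hconv
  have h2pos : (0:ℝ) < 2 ^ (p-1) := Real.rpow_pos_of_pos (by norm_num) _
  have h2split : (2:ℝ)^(p-1) = 2 * 2^(p-2) := by
    rw [show p-1 = 1+(p-2) by ring, Real.rpow_add (by norm_num : (0:ℝ) < 2), Real.rpow_one]
  have h2 : (A+B)^(p-1) ≤ 2^(p-2) * (A^(p-1) + B^(p-1)) := by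
    rw [div_le_iff₀ h2pos] at h1
    rw [h2split] at h1
    nlinarith [Real.rpow_nonneg hA (p-1), Real.rpow_nonneg hB (p-1)]
  have hsplit : (A+B)^p = (A+B)^(p-1) * (A+B) := by
    nth_rewrite 1 [show p = (p-1)+1 by ring]
    rw [rpow_split hAB (by linarith)]
  have hA1 : A ^ (p-1) = A ^ (p-2) * A := by
    rw [show p-1 = (p-2)+1 by ring, rpow_split hA (by linarith)]
  have hB1 : B ^ (p-1) = B ^ (p-2) * B := by
    rw [show p-1 = (p-2)+1 by ring, rpow_split hB (by linarith)]
  have hApow : A ^ p = A ^ (p-1) * A := by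
    nth_rewrite 1 [show p = (p-1)+1 by ring]
    rw [rpow_split hA (by linarith)]
  have hBpow : B ^ p = B ^ (p-1) * B := by
    nth_rewrite 1 [show p = (p-1)+1 by ring]
    rw [rpow_split hB (by linarith)]
  have hcancel : (2:ℝ)^(2-p) * 2^(p-2) = 1 := by
    rw [← Real.rpow_add (by norm_num : (0:ℝ) < 2)]
    norm_num
  have h2p : (0:ℝ) < 2 ^ (2-p) := Real.rpow_pos_of_pos (by norm_num) _
  calc (2:ℝ) ^ (2 - p) * (A + B) ^ p = 2^(2-p) * ((A+B)^(p-1) * (A+B)) := by rw [hsplit]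
    _ ≤ 2^(2-p) * (2^(p-2) * (A^(p-1) + B^(p-1)) * (A+B)) := by
        apply mul_le_mul_of_nonneg_left _ (le_of_lt h2p)
        exact mul_le_mul_of_nonneg_right h2 hAB
    _ = (A^(p-1) + B^(p-1)) * (A+B) := by
        rw [show (2:ℝ)^(2-p) * (2^(p-2) * (A^(p-1) + B^(p-1)) * (A+B))
          = (2^(2-p) * 2^(p-2)) * ((A^(p-1) + B^(p-1)) * (A+B)) by ring, hcancel, one_mul]
    _ = A ^ p + B ^ p + (A ^ (p-2) + B ^ (p-2)) * (A*B) := by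
        rw [hApow, hBpow, hA1, hB1]; ring

private lemma endpoint2_aux {p A B : ℝ} (hp : 2 ≤ p) (hB : 0 ≤ B) (hBA : B ≤ A) :
    (2:ℝ) ^ (2 - p) * |A - B| ^ p ≤ A ^ p + B ^ p - (A ^ (p-2) + B ^ (p-2)) * (A*B) := by
  have hA : 0 ≤ A := le_trans hB hBA
  have hd : 0 ≤ A - B := by linarith
  rw [abs_of_nonneg hd]
  have hsup : (A-B)^(p-1) + B^(p-1) ≤ A^(p-1) := by
    have := rpow_superadd (by linarith : (1:ℝ) ≤ p-1) hd hB
    simpa using this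
  have hsplit : (A-B)^p = (A-B)^(p-1) * (A-B) := by
    nth_rewrite 1 [show p = (p-1)+1 by ring]
    rw [rpow_split hd (by linarith)]
  have hA1 : A ^ (p-1) = A ^ (p-2) * A := by
    rw [show p-1 = (p-2)+1 by ring, rpow_split hA (by linarith)]
  have hB1 : B ^ (p-1) = B ^ (p-2) * B := by
    rw [show p-1 = (p-2)+1 by ring, rpow_split hB (by linarith)]
  have hApow : A ^ p = A ^ (p-1) * A := by
    nth_rewrite 1 [show p = (p-1)+1 by ring]
    rw [rpow_split hA (by linarith)]
  have hBpow : B ^ p = B ^ (p-1) * B := by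
    nth_rewrite 1 [show p = (p-1)+1 by ring]
    rw [rpow_split hB (by linarith)]
  have hone : (2:ℝ)^(2-p) ≤ 1 :=
    Real.rpow_le_one_of_one_le_of_nonpos (by norm_num) (by linarith)
  have hdp : 0 ≤ (A-B)^p := Real.rpow_nonneg hd p
  have key : (A-B)^p ≤ A ^ p + B ^ p - (A ^ (p-2) + B ^ (p-2)) * (A*B) := by
    have hrhs : A ^ p + B ^ p - (A ^ (p-2) + B ^ (p-2)) * (A*B)
        = (A^(p-1) - B^(p-1)) * (A-B) := by
      rw [hApow, hBpow, hA1, hB1]; ring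
    rw [hrhs, hsplit]
    apply mul_le_mul_of_nonneg_right _ hd
    linarith
  calc (2:ℝ)^(2-p) * (A-B)^p ≤ 1 * (A-B)^p := mul_le_mul_of_nonneg_right hone hdp
    _ = (A-B)^p := one_mul _
    _ ≤ _ := key

private lemma endpoint2 {p A B : ℝ} (hp : 2 ≤ p) (hA : 0 ≤ A) (hB : 0 ≤ B) :
    (2:ℝ) ^ (2 - p) * |A - B| ^ p ≤ A ^ p + B ^ p - (A ^ (p-2) + B ^ (p-2)) * (A*B) := by
  rcases le_total B A with h | h
  · exact endpoint2_aux hp hB h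
  · have := endpoint2_aux hp hA h
    rw [abs_sub_comm] at this
    linarith [this]

private lemma key_scalar {p A B c : ℝ} (hp : 2 ≤ p) (hA : 0 ≤ A) (hB : 0 ≤ B)
    (hc : |c| ≤ A * B) :
    (2:ℝ) ^ (2 - p) * (A^2 + B^2 - 2*c) ^ (p/2) ≤
      A ^ p + B ^ p - (A ^ (p-2) + B ^ (p-2)) * c := by
  have hABnn : 0 ≤ A * B := mul_nonneg hA hB
  have hc1 : -(A*B) ≤ c := neg_le_of_abs_le hc
  have hc2 : c ≤ A*B := le_of_abs_le hc
  have hsq1 : ((A+B)^2 : ℝ) ^ (p/2) = (A+B)^p := sq_rpow (by linarith) p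
  have hsq2 : ((A-B)^2 : ℝ) ^ (p/2) = |A-B|^p := by
    rw [← sq_abs]
    exact sq_rpow (abs_nonneg _) p
  rcases eq_or_lt_of_le hABnn with hAB0 | hABpos
  · -- A*B = 0, hence c = 0
    have hcz : c = 0 := by
      have h0 : |c| ≤ 0 := by rw [hAB0]; exact hc
      simpa using le_antisymm h0 (abs_nonneg c)
    subst hcz
    rcases mul_eq_zero.1 hAB0.symm with h | h
    · subst h
      rw [show ((0:ℝ)^2 + B^2 - 2*0 : ℝ) = (0+B)^2 by ring, hsq1]
      have h0 : (0:ℝ)^p = 0 := Real.zero_rpow (by positivity)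
      rw [show ((0:ℝ)+B) = B by ring, h0]
      have hone : (2:ℝ)^(2-p) ≤ 1 :=
        Real.rpow_le_one_of_one_le_of_nonpos (by norm_num) (by linarith)
      nlinarith [Real.rpow_nonneg hB p]
    · subst h
      rw [show (A^2 + (0:ℝ)^2 - 2*0 : ℝ) = (A+0)^2 by ring, hsq1]
      have h0 : (0:ℝ)^p = 0 := Real.zero_rpow (by positivity)
      rw [show (A+(0:ℝ)) = A by ring, h0]
      have hone : (2:ℝ)^(2-p) ≤ 1 :=
        Real.rpow_le_one_of_one_le_of_nonpos (by norm_num) (by linarith)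
      nlinarith [Real.rpow_nonneg hA p]
  · set t : ℝ := (c / (A*B) + 1) / 2 with ht
    have hABne : (A*B) ≠ 0 := ne_of_gt hABpos
    have hA0 : A ≠ 0 := left_ne_zero_of_mul hABne
    have hB0 : B ≠ 0 := right_ne_zero_of_mul hABne
    have ht0 : 0 ≤ t := by
      rw [ht]
      have : -1 ≤ c / (A*B) := by
        rw [le_div_iff₀ hABpos]; linarith
      linarith
    have ht1 : t ≤ 1 := by
      rw [ht]
      have : c / (A*B) ≤ 1 := by
        rw [div_le_iff₀ hABpos]; linarith
      linarith
    have hcomb : A^2 + B^2 - 2*c = (1-t)*(A+B)^2 + t*(A-B)^2 := by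
      rw [ht]; field_simp; ring
    have hconv := (convexOn_rpow (by linarith : (1:ℝ) ≤ p/2)).2
      (mem_Ici.2 (sq_nonneg (A+B))) (mem_Ici.2 (sq_nonneg (A-B)))
      (by linarith : (0:ℝ) ≤ 1 - t) ht0 (by ring)
    simp only [smul_eq_mul] at hconv
    have hct : c = (2*t - 1) * (A*B) := by
      rw [ht]; field_simp; ring
    have h2p : (0:ℝ) ≤ 2 ^ (2-p) := le_of_lt (Real.rpow_pos_of_pos (by norm_num) _)
    have e1 := endpoint1 hp hA hB
    have e2 := endpoint2 hp hA hB
    calc (2:ℝ) ^ (2 - p) * (A^2 + B^2 - 2*c) ^ (p/2)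
        = 2^(2-p) * ((1-t)*(A+B)^2 + t*(A-B)^2) ^ (p/2) := by rw [hcomb]
      _ ≤ 2^(2-p) * ((1-t)*((A+B)^2)^(p/2) + t*((A-B)^2)^(p/2)) := by
          exact mul_le_mul_of_nonneg_left hconv h2p
      _ = (1-t)*(2^(2-p)*(A+B)^p) + t*(2^(2-p)*|A-B|^p) := by
          rw [hsq1, hsq2]; ring
      _ ≤ (1-t)*(A ^ p + B ^ p + (A ^ (p-2) + B ^ (p-2)) * (A*B))
            + t*(A ^ p + B ^ p - (A ^ (p-2) + B ^ (p-2)) * (A*B)) := by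
          have h1 := mul_le_mul_of_nonneg_left e1 (by linarith : (0:ℝ) ≤ 1 - t)
          have h2 := mul_le_mul_of_nonneg_left e2 ht0
          linarith
      _ = A ^ p + B ^ p - (A ^ (p-2) + B ^ (p-2)) * c := by
          rw [hct]; ring

/-- `2^{2−p} ‖b − a‖^p ≤ ⟨|b|^{p-2} b − |a|^{p-2} a, b − a⟩` for `p ≥ 2`. -/
theorem strong_monotonicity_p_power {n : ℕ} (p : ℝ) (hp : 2 ≤ p)
    (a b : EuclideanSpace ℝ (Fin n)) :
    (2 : ℝ) ^ (2 - p) * ‖b - a‖ ^ p ≤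
      ⟪‖b‖ ^ (p - 2) • b - ‖a‖ ^ (p - 2) • a, b - a⟫ := by
  have hA : (0:ℝ) ≤ ‖a‖ := norm_nonneg a
  have hB : (0:ℝ) ≤ ‖b‖ := norm_nonneg b
  have hcs : |⟪a, b⟫| ≤ ‖a‖ * ‖b‖ := abs_real_inner_le_norm a b
  have hinner : ⟪‖b‖ ^ (p - 2) • b - ‖a‖ ^ (p - 2) • a, b - a⟫
      = ‖a‖ ^ p + ‖b‖ ^ p - (‖a‖ ^ (p-2) + ‖b‖ ^ (p-2)) * ⟪a, b⟫ := by
    have hbb : ⟪b, b⟫ = ‖b‖^2 := real_inner_self_eq_norm_sq b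
    have haa : ⟪a, a⟫ = ‖a‖^2 := real_inner_self_eq_norm_sq a
    have hab : ⟪b, a⟫ = ⟪a, b⟫ := real_inner_comm a b
    have hAp : ‖a‖ ^ (p-2) * ‖a‖^2 = ‖a‖ ^ p := by
      rw [← Real.rpow_natCast ‖a‖ 2,
        ← Real.rpow_add_of_nonneg hA (by linarith) (by norm_num)]
      norm_num
    have hBp : ‖b‖ ^ (p-2) * ‖b‖^2 = ‖b‖ ^ p := by
      rw [← Real.rpow_natCast ‖b‖ 2,
        ← Real.rpow_add_of_nonneg hB (by linarith) (by norm_num)]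
      norm_num
    rw [inner_sub_left, inner_sub_right, inner_sub_right, real_inner_smul_left,
      real_inner_smul_left, real_inner_smul_left, real_inner_smul_left,
      hbb, haa, hab]
    rw [← hAp, ← hBp]; ring
  have hnorm : ‖b - a‖ ^ p = (‖a‖^2 + ‖b‖^2 - 2*⟪a, b⟫) ^ (p/2) := by
    have h1 : ‖b - a‖^2 = ‖a‖^2 + ‖b‖^2 - 2*⟪a, b⟫ := by
      rw [norm_sub_sq_real, real_inner_comm b a]; ring
    rw [← h1]
    exact (sq_rpow (norm_nonneg _) p).symm
  rw [hinner, hnorm]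
  exact key_scalar hp hA hB hcs
end

section
/- For all vectors a, b in ℝ^n and real p with 1 < p ≤ 2, ⟨|b|^{p-2} b − |a|^{p-2} a, b − a⟩ ≥ (p−1) ‖b − a‖² / (1 + ‖a‖² + ‖b‖²)^{(2−p)/2}. -/
open Real

-- x^(p-2) * x = x^(p-1), x^(p-1) * x = x^p style
lemma rp_succ {x q : ℝ} (hx : 0 ≤ x) (hq : q + 1 ≠ 0) : x ^ q * x = x ^ (q + 1) := by
  rcases eq_or_lt_of_le hx with h | h
  · simp [← h, Real.zero_rpow hq]
  · rw [Real.rpow_add_one h.ne' q]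

lemma rp_sq {x p : ℝ} (hx : 0 ≤ x) (hp : 0 < p) : x ^ (p - 2) * x ^ (2:ℕ) = x ^ p := by
  rcases eq_or_lt_of_le hx with h | h
  · simp [← h, Real.zero_rpow hp.ne']
  · rw [← Real.rpow_natCast x 2, ← Real.rpow_add h]; norm_num

-- aux3 : S^((p-2)/2) ≤ x^(p-2)
lemma aux3 {p x S : ℝ} (hp2 : p ≤ 2) (hx : 0 < x) (hS : 0 < S) (hxS : x ^ (2:ℕ) ≤ S) :
    S ^ ((p - 2) / 2) ≤ x ^ (p - 2) := by
  have hxs : x ≤ S ^ ((1:ℝ)/2) := by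
    rw [← Real.sqrt_eq_rpow]
    exact (Real.le_sqrt hx.le hS.le).mpr (by simpa [sq] using hxS)
  have h1 : S ^ ((p - 2) / 2) = (S ^ ((1:ℝ)/2)) ^ (p - 2) := by
    rw [← Real.rpow_mul hS.le]; ring_nf
  rw [h1]
  exact Real.rpow_le_rpow_of_nonpos hx hxs (by linarith)

-- aux1 : x * S^((p-2)/2) ≤ x^(p-1)
lemma aux1 {p x S : ℝ} (hp1 : 1 < p) (hp2 : p ≤ 2) (hx : 0 ≤ x) (hS : 0 < S)
    (hxS : x ^ (2:ℕ) ≤ S) : x * S ^ ((p - 2) / 2) ≤ x ^ (p - 1) := by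
  rcases eq_or_lt_of_le hx with h | h
  · simp [← h, Real.zero_rpow (by linarith : p - 1 ≠ 0)]
  · have h1 := aux3 hp2 h hS hxS
    calc x * S ^ ((p-2)/2) ≤ x * x ^ (p-2) := by
          exact mul_le_mul_of_nonneg_left h1 h.le
      _ = x ^ (p-1) := by rw [mul_comm, rp_succ hx (by intro h'; linarith [h'] )]; congr 1; ring

-- aux2 : Bernoulli / concavity tangent line
lemma aux2 {q A B : ℝ} (hq0 : 0 < q) (hq1 : q ≤ 1) (hA : 0 < A) (hB : 0 ≤ B) (hBA : B ≤ A) :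
    q * A ^ (q - 1) * (A - B) ≤ A ^ q - B ^ q := by
  have hs : (-1:ℝ) ≤ B / A - 1 := by
    have : 0 ≤ B / A := div_nonneg hB hA.le
    linarith
  have hber := rpow_one_add_le_one_add_mul_self hs hq0.le hq1
  rw [show 1 + (B / A - 1) = B / A by ring] at hber
  rw [Real.div_rpow hB hA.le] at hber
  have hAq : 0 < A ^ q := Real.rpow_pos_of_pos hA q
  rw [div_le_iff₀ hAq] at hber
  -- hber : B ^ q ≤ (1 + q * (B / A - 1)) * A ^ q
  have hA1 : A ^ (q - 1) * A = A ^ q := by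
    rw [rp_succ hA.le (by ring_nf; exact hq0.ne' : q - 1 + 1 ≠ 0)]; congr 1; ring
  have hkey : (1 + q * (B / A - 1)) * A ^ q = A ^ q + q * (B - A) * A ^ (q - 1) := by
    rw [← hA1]; field_simp
  rw [hkey] at hber
  linarith

lemma affine_aux {c0 c1 t M : ℝ} (ht : |t| ≤ M) (h1 : 0 ≤ c0 + c1 * M)
    (h2 : 0 ≤ c0 - c1 * M) : 0 ≤ c0 + c1 * t := by
  obtain ⟨hl, hr⟩ := abs_le.mp ht
  rcases le_total 0 c1 with h | h
  · nlinarith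
  · nlinarith

lemma Eneg {p A B S : ℝ} (hp1 : 1 < p) (hp2 : p ≤ 2) (hA : 0 ≤ A) (hB : 0 ≤ B) (hS : 0 < S)
    (hAS : A ^ (2:ℕ) ≤ S) (hBS : B ^ (2:ℕ) ≤ S) :
    (p - 1) * (A ^ (2:ℕ) + B ^ (2:ℕ) + 2 * (A * B)) * S ^ ((p - 2) / 2) ≤
      A ^ p + B ^ p + (A ^ (p - 2) + B ^ (p - 2)) * (A * B) := by
  have hS' : 0 ≤ S ^ ((p - 2) / 2) := (Real.rpow_pos_of_pos hS _).le
  have h1 := aux1 hp1 hp2 hA hS hAS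
  have h2 := aux1 hp1 hp2 hB hS hBS
  have eA1 : A ^ (p - 2) * A = A ^ (p - 1) := by
    rw [rp_succ hA (by intro h; linarith : p - 2 + 1 ≠ 0)]; congr 1; ring
  have eB1 : B ^ (p - 2) * B = B ^ (p - 1) := by
    rw [rp_succ hB (by intro h; linarith : p - 2 + 1 ≠ 0)]; congr 1; ring
  have eA2 : A ^ (p - 1) * A = A ^ p := by
    rw [rp_succ hA (by intro h; linarith : p - 1 + 1 ≠ 0)]; congr 1; ring
  have eB2 : B ^ (p - 1) * B = B ^ p := by
    rw [rp_succ hB (by intro h; linarith : p - 1 + 1 ≠ 0)]; congr 1; ring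
  -- RHS = (A+B)(A^(p-1)+B^(p-1))
  have hrhs : A ^ p + B ^ p + (A ^ (p - 2) + B ^ (p - 2)) * (A * B) =
      (A + B) * (A ^ (p - 1) + B ^ (p - 1)) := by
    rw [← eA2, ← eB2, ← eA1, ← eB1]; ring
  rw [hrhs]
  have key : (A + B) * ((A + B) * S ^ ((p - 2) / 2)) ≤ (A + B) * (A ^ (p - 1) + B ^ (p - 1)) := by
    apply mul_le_mul_of_nonneg_left _ (by linarith)
    calc (A + B) * S ^ ((p - 2) / 2)
        = A * S ^ ((p - 2) / 2) + B * S ^ ((p - 2) / 2) := by ring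
      _ ≤ A ^ (p - 1) + B ^ (p - 1) := add_le_add h1 h2
  nlinarith [mul_nonneg (mul_nonneg (add_nonneg hA hB) (add_nonneg hA hB)) hS']

lemma Epos' {p A B S : ℝ} (hp1 : 1 < p) (hp2 : p ≤ 2) (hB : 0 ≤ B) (hBA : B ≤ A) (hS : 0 < S)
    (hAS : A ^ (2:ℕ) ≤ S) :
    (p - 1) * (A ^ (2:ℕ) + B ^ (2:ℕ) - 2 * (A * B)) * S ^ ((p - 2) / 2) ≤
      A ^ p + B ^ p - (A ^ (p - 2) + B ^ (p - 2)) * (A * B) := by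
  have hA : 0 ≤ A := hB.trans hBA
  rcases eq_or_lt_of_le hA with h0 | h0
  · have hA0 : A = 0 := h0.symm
    have hB0 : B = 0 := le_antisymm (hA0 ▸ hBA) hB
    simp [hA0, hB0, Real.zero_rpow (by linarith : p ≠ 0)]
  have eA1 : A ^ (p - 2) * A = A ^ (p - 1) := by
    rw [rp_succ hA (by intro h; linarith : p - 2 + 1 ≠ 0)]; congr 1; ring
  have eB1 : B ^ (p - 2) * B = B ^ (p - 1) := by
    rw [rp_succ hB (by intro h; linarith : p - 2 + 1 ≠ 0)]; congr 1; ring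
  have eA2 : A ^ (p - 1) * A = A ^ p := by
    rw [rp_succ hA (by intro h; linarith : p - 1 + 1 ≠ 0)]; congr 1; ring
  have eB2 : B ^ (p - 1) * B = B ^ p := by
    rw [rp_succ hB (by intro h; linarith : p - 1 + 1 ≠ 0)]; congr 1; ring
  have hrhs : A ^ p + B ^ p - (A ^ (p - 2) + B ^ (p - 2)) * (A * B) =
      (A - B) * (A ^ (p - 1) - B ^ (p - 1)) := by
    rw [← eA2, ← eB2, ← eA1, ← eB1]; ring
  rw [hrhs]
  have htang := aux2 (q := p - 1) (by linarith) (by linarith) h0 hB hBA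
  -- htang : (p-1) * A^(p-2) * (A - B) ≤ A^(p-1) - B^(p-1)  (after exponent rewrite)
  rw [show p - 1 - 1 = p - 2 by ring] at htang
  have hcmp := aux3 hp2 h0 hS hAS
  have hAB : 0 ≤ A - B := by linarith
  have step1 : (p - 1) * S ^ ((p - 2) / 2) * (A - B) ≤ (p - 1) * A ^ (p - 2) * (A - B) := by
    apply mul_le_mul_of_nonneg_right _ hAB
    apply mul_le_mul_of_nonneg_left hcmp (by linarith)
  have step2 : (A - B) * ((p - 1) * A ^ (p - 2) * (A - B)) ≤ (A - B) * (A ^ (p - 1) - B ^ (p - 1)) :=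
    mul_le_mul_of_nonneg_left htang hAB
  nlinarith [mul_le_mul_of_nonneg_left step1 hAB]

lemma Epos {p A B S : ℝ} (hp1 : 1 < p) (hp2 : p ≤ 2) (hA : 0 ≤ A) (hB : 0 ≤ B) (hS : 0 < S)
    (hAS : A ^ (2:ℕ) ≤ S) (hBS : B ^ (2:ℕ) ≤ S) :
    (p - 1) * (A ^ (2:ℕ) + B ^ (2:ℕ) - 2 * (A * B)) * S ^ ((p - 2) / 2) ≤
      A ^ p + B ^ p - (A ^ (p - 2) + B ^ (p - 2)) * (A * B) := by
  rcases le_total B A with h | h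
  · exact Epos' hp1 hp2 hB h hS hAS
  · have := Epos' hp1 hp2 hA h hS hBS
    nlinarith [this]

open scoped RealInnerProductSpace

/-- For `1 < p ≤ 2`,
`⟨|b|^{p-2} b − |a|^{p-2} a, b − a⟩ ≥ (p−1) ‖b−a‖² / (1 + ‖a‖² + ‖b‖²)^{(2−p)/2}`. -/
theorem monotonicity_singular_case {n : ℕ} (p : ℝ) (hp1 : 1 < p) (hp2 : p ≤ 2)
    (a b : EuclideanSpace ℝ (Fin n)) :
    (p - 1) * ‖b - a‖ ^ 2 / (1 + ‖a‖ ^ 2 + ‖b‖ ^ 2) ^ ((2 - p) / 2) ≤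
      ⟪‖b‖ ^ (p - 2) • b - ‖a‖ ^ (p - 2) • a, b - a⟫ := by
  set A := ‖a‖ with hA'
  set B := ‖b‖ with hB'
  set t := ⟪a, b⟫ with ht'
  set S := 1 + A ^ 2 + B ^ 2 with hS'
  have hA : 0 ≤ A := norm_nonneg a
  have hB : 0 ≤ B := norm_nonneg b
  have hS : 0 < S := by positivity
  have hAS : A ^ (2:ℕ) ≤ S := by nlinarith [sq_nonneg B]
  have hBS : B ^ (2:ℕ) ≤ S := by nlinarith [sq_nonneg A]
  have hCS : |t| ≤ A * B := abs_real_inner_le_norm a b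
  have hnorm : ‖b - a‖ ^ 2 = B ^ 2 - 2 * t + A ^ 2 := by
    rw [norm_sub_sq_real, real_inner_comm]
  have hinner : ⟪B ^ (p - 2) • b - A ^ (p - 2) • a, b - a⟫ =
      B ^ (p - 2) * B ^ (2:ℕ) + A ^ (p - 2) * A ^ (2:ℕ) - (A ^ (p - 2) + B ^ (p - 2)) * t := by
    simp only [inner_sub_left, inner_sub_right, real_inner_smul_left,
      real_inner_self_eq_norm_sq]
    rw [real_inner_comm a b, ← ht', ← hA', ← hB']
    ring
  have hdiv : (p - 1) * ‖b - a‖ ^ 2 / S ^ ((2 - p) / 2) =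
      (p - 1) * (B ^ 2 - 2 * t + A ^ 2) * S ^ ((p - 2) / 2) := by
    rw [hnorm, div_eq_iff (Real.rpow_pos_of_pos hS ((2 - p) / 2)).ne', mul_assoc,
      ← Real.rpow_add hS, show (p - 2) / 2 + (2 - p) / 2 = 0 by ring, Real.rpow_zero, mul_one]
  rw [hdiv, hinner, rp_sq hA (by linarith), rp_sq hB (by linarith)]
  have hEp := Epos hp1 hp2 hA hB hS hAS hBS
  have hEn := Eneg hp1 hp2 hA hB hS hAS hBS
  have key : 0 ≤ (A ^ p + B ^ p - (p - 1) * (A ^ 2 + B ^ 2) * S ^ ((p - 2) / 2)) +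
      (2 * (p - 1) * S ^ ((p - 2) / 2) - (A ^ (p - 2) + B ^ (p - 2))) * t := by
    apply affine_aux hCS
    · nlinarith [hEp]
    · nlinarith [hEn]
  nlinarith [key]
end

section
/- For all real numbers a, b and real p ≥ 2, one has the bound | |b|^{p-2} b − |a|^{p-2} a | ≤ (p−1) (|b|^{(p-2)/2} + |a|^{(p-2)/2}) · | |b|^{(p-2)/2} b − |a|^{(p-2)/2} a |. -/
open Real Set

private lemma rpow_mvt {c s t : ℝ} (hc : 1 ≤ c) (hs : 0 ≤ s) (hst : s ≤ t) :
    t ^ c - s ^ c ≤ c * t ^ (c - 1) * (t - s) := by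
  have hc0 : (0:ℝ) ≤ c := zero_le_one.trans hc
  have key : ∀ x ∈ Icc s t,
      ‖(fun x : ℝ => x ^ c) x - (fun x : ℝ => x ^ c) s‖ ≤ (c * t ^ (c - 1)) * (x - s) := by
    apply norm_image_sub_le_of_norm_deriv_le_segment'
      (f' := fun x : ℝ => c * x ^ (c - 1))
    · intro x _
      exact (Real.hasDerivAt_rpow_const (Or.inr hc)).hasDerivWithinAt
    · intro x hx
      have hx0 : 0 ≤ x := hs.trans hx.1
      rw [Real.norm_eq_abs, abs_mul, abs_of_nonneg hc0,
        abs_of_nonneg (Real.rpow_nonneg hx0 _)]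
      exact mul_le_mul_of_nonneg_left
        (Real.rpow_le_rpow hx0 hx.2.le (by linarith)) hc0
  have h := key t (right_mem_Icc.2 hst)
  rw [Real.norm_eq_abs] at h
  exact (le_abs_self _).trans h

private lemma signed_aux {α x y : ℝ} (hα : 0 ≤ α) (hy : 0 ≤ y) (hxy : |x| ≤ y) :
    |y ^ α * y - |x| ^ α * x| ≤ (1 + α) * y ^ α * (y - x) := by
  have hxley : x ≤ y := (le_abs_self x).trans hxy
  rcases le_or_gt 0 x with hx | hx
  · rw [abs_of_nonneg hx] at hxy ⊢
    have h1 : x ^ α * x ≤ y ^ α * y :=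
      mul_le_mul (Real.rpow_le_rpow hx hxy hα) hxley hx (Real.rpow_nonneg hy α)
    rw [abs_of_nonneg (by linarith)]
    have h2 : y ^ (α + 1) - x ^ (α + 1) ≤ (α + 1) * y ^ ((α + 1) - 1) * (y - x) :=
      rpow_mvt (by linarith) hx hxy
    rw [show (α + 1) - 1 = α by ring] at h2
    rw [Real.rpow_add' hy (by positivity), Real.rpow_one,
        Real.rpow_add' hx (by positivity), Real.rpow_one] at h2
    linarith
  · have h1 : |x| ^ α ≤ y ^ α := Real.rpow_le_rpow (abs_nonneg x) hxy hα
    have h2 : (0:ℝ) ≤ y ^ α := Real.rpow_nonneg hy α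
    have h3 : (0:ℝ) ≤ |x| ^ α := Real.rpow_nonneg (abs_nonneg x) α
    have h4 : |x| ^ α * (-x) ≤ y ^ α * (-x) :=
      mul_le_mul_of_nonneg_right h1 (by linarith)
    have t1 : 0 ≤ α * (y ^ α * y) := mul_nonneg hα (mul_nonneg h2 hy)
    have t2 : 0 ≤ α * (y ^ α * (-x)) :=
      mul_nonneg hα (mul_nonneg h2 (by linarith))
    rw [abs_of_nonneg (by nlinarith [mul_nonneg h2 hy])]
    nlinarith

private lemma signed_aux2 {α x y : ℝ} (hα : 0 ≤ α) (hxy : |x| ≤ |y|) :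
    |(|y| ^ α * y - |x| ^ α * x)| ≤ (1 + α) * |y| ^ α * |y - x| := by
  rcases le_or_gt 0 y with hy | hy
  · rw [abs_of_nonneg hy] at hxy ⊢
    have hxley : x ≤ y := (le_abs_self x).trans hxy
    rw [abs_of_nonneg (by linarith : (0:ℝ) ≤ y - x)]
    exact signed_aux hα hy hxy
  · have hy' : (0:ℝ) ≤ -y := by linarith
    have hxy' : |(-x)| ≤ -y := by rwa [abs_neg, ← abs_of_neg hy]
    have h := signed_aux hα hy' hxy'
    have e1 : (-y) ^ α * (-y) - |(-x)| ^ α * (-x) = -(((-y) ^ α) * y - |x| ^ α * x) := by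
      rw [abs_neg]; ring
    rw [e1, abs_neg] at h
    have hyx : y - x ≤ 0 := by
      have := neg_abs_le x
      have := abs_of_neg hy
      nlinarith
    have e2 : |y - x| = -y - -x := by rw [abs_of_nonpos hyx]; ring
    rw [abs_of_neg hy, e2]
    exact h

/-- For real `a, b` and `p ≥ 2`:
`||b|^{p-2} b − |a|^{p-2} a| ≤ (p−1)(|b|^{(p-2)/2} + |a|^{(p-2)/2}) ||b|^{(p-2)/2} b − |a|^{(p-2)/2} a|`. -/
theorem signed_power_difference_bound (p : ℝ) (hp : 2 ≤ p) (a b : ℝ) :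
    abs (|b| ^ (p - 2) * b - |a| ^ (p - 2) * a) ≤
      (p - 1) * (|b| ^ ((p - 2) / 2) + |a| ^ ((p - 2) / 2)) *
        abs (|b| ^ ((p - 2) / 2) * b - |a| ^ ((p - 2) / 2) * a) := by
  have hp0 : (0:ℝ) < p := by linarith
  set q : ℝ := (p - 2) / 2 with hq
  set α : ℝ := (p - 2) / p with hαdef
  have hα : 0 ≤ α := div_nonneg (by linarith) hp0.le
  have hq0 : 0 ≤ q := by rw [hq]; linarith
  set u : ℝ := |b| ^ q * b with hu
  set v : ℝ := |a| ^ q * a with hv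
  have habsu : ∀ s : ℝ, |(|s| ^ q * s)| = |s| ^ (p / 2) := by
    intro s
    rw [abs_mul, abs_of_nonneg (Real.rpow_nonneg (abs_nonneg s) q)]
    rw [show p / 2 = q + 1 by rw [hq]; ring,
      Real.rpow_add' (abs_nonneg s) (by intro hc; rw [hq] at hc; linarith),
      Real.rpow_one]
  have hpowα : ∀ s : ℝ, (|s| ^ (p / 2)) ^ α = |s| ^ q := by
    intro s
    rw [← Real.rpow_mul (abs_nonneg s)]
    congr 1
    rw [hαdef, hq]
    field_simp
  have habs2 : ∀ s : ℝ, |s| ^ (p - 2) = |s| ^ q * |s| ^ q := by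
    intro s
    rw [show p - 2 = q * 2 by rw [hq]; ring, Real.rpow_mul (abs_nonneg s),
      Real.rpow_two, pow_two]
  have hgb : ∀ s : ℝ, |(|s| ^ q * s)| ^ α * (|s| ^ q * s) = |s| ^ (p - 2) * s := by
    intro s
    rw [habsu, hpowα, habs2]; ring
  have h1α : 1 + α ≤ p - 1 := by
    have h2 : α ≤ p - 2 := div_le_self (by linarith) (by linarith)
    linarith
  have hqn : ∀ s : ℝ, (0:ℝ) ≤ |s| ^ q := fun s => Real.rpow_nonneg (abs_nonneg s) q
  rcases le_total |v| |u| with hle | hle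
  · have h := signed_aux2 hα hle
    rw [hu, hv, hgb b, hgb a, habsu b, hpowα b] at h
    refine h.trans (mul_le_mul_of_nonneg_right ?_ (abs_nonneg _))
    exact mul_le_mul h1α (le_add_of_nonneg_right (hqn a)) (hqn b) (by linarith)
  · have h := signed_aux2 hα hle
    rw [hu, hv, hgb b, hgb a, habsu a, hpowα a,
      abs_sub_comm (|a| ^ (p - 2) * a), abs_sub_comm (|a| ^ q * a)] at h
    refine h.trans (mul_le_mul_of_nonneg_right ?_ (abs_nonneg _))
    exact mul_le_mul h1α (le_add_of_nonneg_left (hqn b)) (hqn a) (by linarith)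
end

section
/- Let p ≥ 2 and q = p/(p−1). For every ε > 0 there is a constant C depending only on p such that for all real numbers a, b: | |b|^{p-2} b − |a|^{p-2} a |^q ≤ C ( ε · | |b|^{(p-2)/2} b − |a|^{(p-2)/2} a |² + ε^{−p/(p−2)} (|b|^p + |a|^p) ). -/
open Real


private lemma spd_helper1 {γ u v : ℝ} (hγ0 : 0 ≤ γ) (hγ1 : γ ≤ 1) (hu : 0 ≤ u)
    (huv : u ≤ v) : v ^ γ * v - u ^ γ * u ≤ 2 * v ^ γ * (v - u) := by
  have hv : 0 ≤ v := hu.trans huv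
  rcases hv.eq_or_lt with hv0 | hv0
  · have hu0 : u = 0 := le_antisymm (hv0 ▸ huv) hu
    simp [hu0, ← hv0]
  · have hs : -1 ≤ u / v - 1 := by
      have : 0 ≤ u / v := div_nonneg hu hv
      linarith
    have hb := one_add_mul_self_le_rpow_one_add hs (by linarith : (1:ℝ) ≤ γ + 1)
    rw [show 1 + (u / v - 1) = u / v by ring] at hb
    have hdiv : (u / v) ^ (γ + 1) = u ^ (γ + 1) / v ^ (γ + 1) := Real.div_rpow hu hv _
    have hvp : 0 < v ^ (γ + 1) := Real.rpow_pos_of_pos hv0 _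
    rw [hdiv] at hb
    have h2 : v ^ (γ + 1) * (1 + (γ + 1) * (u / v - 1)) ≤ u ^ (γ + 1) := by
      calc v ^ (γ + 1) * (1 + (γ + 1) * (u / v - 1))
          ≤ v ^ (γ + 1) * (u ^ (γ + 1) / v ^ (γ + 1)) :=
            mul_le_mul_of_nonneg_left hb hvp.le
        _ = u ^ (γ + 1) := by field_simp
    have hvv : v ^ (γ + 1) = v ^ γ * v := Real.rpow_add_one hv0.ne' γ
    have huu : u ^ (γ + 1) = u ^ γ * u := by
      rcases hu.eq_or_lt with hu0 | hu0
      · rw [← hu0, Real.zero_rpow (by linarith : γ + 1 ≠ 0), mul_zero]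
      · exact Real.rpow_add_one hu0.ne' γ
    rw [hvv, huu] at h2
    have hkey : v ^ γ * v * (1 + (γ + 1) * (u / v - 1)) =
        v ^ γ * v - (γ + 1) * (v ^ γ * (v - u)) := by
      field_simp
      ring
    rw [hkey] at h2
    have hg : 0 ≤ v ^ γ * (v - u) := mul_nonneg (Real.rpow_nonneg hv γ) (by linarith)
    nlinarith

private lemma spd_keyAux {γ : ℝ} (hγ0 : 0 ≤ γ) (hγ1 : γ ≤ 1) {u v : ℝ} (huv : u ≤ v) :
    |(|v| ^ γ * v - |u| ^ γ * u)| ≤ 2 * max |u| |v| ^ γ * |v - u| := by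
  rcases le_or_gt 0 u with hu | hu
  · -- 0 ≤ u ≤ v
    have hv : 0 ≤ v := hu.trans huv
    rw [abs_of_nonneg hu, abs_of_nonneg hv, max_eq_right huv,
      abs_of_nonneg (by linarith : (0:ℝ) ≤ v - u)]
    have hmono : u ^ γ * u ≤ v ^ γ * v :=
      mul_le_mul (Real.rpow_le_rpow hu huv hγ0) huv hu (Real.rpow_nonneg hv γ)
    rw [abs_of_nonneg (by linarith)]
    exact spd_helper1 hγ0 hγ1 hu huv
  · rcases le_or_gt v 0 with hv | hv
    · -- u ≤ v ≤ 0
      have h := spd_helper1 hγ0 hγ1 (by linarith : (0:ℝ) ≤ -v) (by linarith : -v ≤ -u)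
      rw [abs_of_nonpos hu.le, abs_of_nonpos hv, max_eq_left (by linarith : -v ≤ -u),
        abs_of_nonneg (by linarith : (0:ℝ) ≤ v - u)]
      have heq : |(-v) ^ γ * v - (-u) ^ γ * u| = (-u) ^ γ * -u - (-v) ^ γ * -v := by
        rw [show (-v) ^ γ * v - (-u) ^ γ * u = (-u) ^ γ * -u - (-v) ^ γ * -v by ring,
          abs_of_nonneg]
        have : (-v) ^ γ * -v ≤ (-u) ^ γ * -u :=
          mul_le_mul (Real.rpow_le_rpow (by linarith) (by linarith) hγ0) (by linarith)
            (by linarith) (Real.rpow_nonneg (by linarith) γ)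
        linarith
      rw [heq]
      calc (-u) ^ γ * -u - (-v) ^ γ * -v ≤ 2 * (-u) ^ γ * (-u - -v) := h
        _ = 2 * (-u) ^ γ * (v - u) := by ring
    · -- u < 0 < v
      have hM : |u| ≤ max |u| |v| := le_max_left _ _
      have hM' : |v| ≤ max |u| |v| := le_max_right _ _
      have hMnn : 0 ≤ max |u| |v| := (abs_nonneg u).trans hM
      have h1 : |v| ^ γ * v ≤ max |u| |v| ^ γ * v :=
        mul_le_mul_of_nonneg_right (Real.rpow_le_rpow (abs_nonneg v) hM' hγ0) hv.le
      have h2 : |u| ^ γ * (-u) ≤ max |u| |v| ^ γ * (-u) :=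
        mul_le_mul_of_nonneg_right (Real.rpow_le_rpow (abs_nonneg u) hM hγ0) (by linarith)
      have hg : 0 ≤ max |u| |v| ^ γ * (v - u) :=
        mul_nonneg (Real.rpow_nonneg hMnn γ) (by linarith)
      have hnn : 0 ≤ |v| ^ γ * v - |u| ^ γ * u := by
        have := mul_nonneg (Real.rpow_nonneg (abs_nonneg v) γ) hv.le
        nlinarith [Real.rpow_nonneg (abs_nonneg u) γ]
      rw [abs_of_nonneg hnn, abs_of_nonneg (by linarith : (0:ℝ) ≤ v - u)]
      calc |v| ^ γ * v - |u| ^ γ * u = |v| ^ γ * v + |u| ^ γ * (-u) := by ring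
        _ ≤ max |u| |v| ^ γ * v + max |u| |v| ^ γ * (-u) := add_le_add h1 h2
        _ = max |u| |v| ^ γ * (v - u) := by ring
        _ ≤ 2 * max |u| |v| ^ γ * (v - u) := by nlinarith [hg]

private lemma spd_key {γ : ℝ} (hγ0 : 0 ≤ γ) (hγ1 : γ ≤ 1) (u v : ℝ) :
    |(|v| ^ γ * v - |u| ^ γ * u)| ≤ 2 * max |u| |v| ^ γ * |v - u| := by
  rcases le_total u v with h | h
  · exact spd_keyAux hγ0 hγ1 h
  · have := spd_keyAux hγ0 hγ1 h
    rwa [abs_sub_comm, max_comm, abs_sub_comm u v] at this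

/-- For `p ≥ 2`, `q = p/(p−1)`, there is `C = C(p)` such that for every `ε > 0` and all reals `a, b`:
`||b|^{p-2}b − |a|^{p-2}a|^q ≤ C(ε ||b|^{(p-2)/2}b − |a|^{(p-2)/2}a|² + ε^{−p/(p−2)}(|b|^p + |a|^p))`. -/
theorem signed_power_difference_young_bound (p q : ℝ) (hp : 2 ≤ p) (hq : q = p / (p - 1)) :
    ∃ C > 0, ∀ ε > (0 : ℝ), ∀ a b : ℝ,
      (abs (|b| ^ (p - 2) * b - |a| ^ (p - 2) * a)) ^ q ≤
        C * (ε * (abs (|b| ^ ((p - 2) / 2) * b - |a| ^ ((p - 2) / 2) * a)) ^ 2 +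
          ε ^ (-(p / (p - 2))) * (|b| ^ p + |a| ^ p)) := by
  refine ⟨4, by norm_num, fun ε hε a b => ?_⟩
  rcases eq_or_lt_of_le hp with hp2 | hp2
  · obtain rfl : p = 2 := hp2.symm
    have hq2 : q = 2 := by norm_num [hq]
    subst hq2
    norm_num
    nlinarith [sq_nonneg (a+b), sq_nonneg (a-b), mul_nonneg hε.le (sq_nonneg (b-a))]
  · -- 2 < p
    subst hq
    have hp0 : (0:ℝ) < p := by linarith
    have hpm1 : (0:ℝ) < p - 1 := by linarith
    have hpm2 : (0:ℝ) < p - 2 := by linarith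
    set q : ℝ := p / (p - 1) with hq
    have hq0 : 0 < q := by positivity
    have hq1 : 1 < q := by rw [hq, lt_div_iff₀ hpm1]; linarith
    have hq2lt : q < 2 := by rw [hq, div_lt_iff₀ hpm1]; linarith
    set γ : ℝ := (p - 2) / p with hγ
    have hγ0 : 0 ≤ γ := by positivity
    have hγ1 : γ ≤ 1 := by rw [hγ, div_le_one hp0]; linarith
    set A : ℝ := |a| ^ ((p - 2) / 2) * a with hA
    set B : ℝ := |b| ^ ((p - 2) / 2) * b with hB
    have habs : ∀ x : ℝ, |(|x| ^ ((p - 2) / 2) * x)| = |x| ^ (p / 2) := by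
      intro x
      rcases eq_or_ne x 0 with rfl | hx
      · simp [Real.zero_rpow (show p / 2 ≠ 0 by positivity)]
      · have hx0 : 0 < |x| := abs_pos.mpr hx
        rw [abs_mul, abs_of_nonneg (Real.rpow_nonneg (abs_nonneg x) _),
          ← Real.rpow_add_one hx0.ne']
        congr 1
        ring
    have hident : ∀ x : ℝ, |(|x| ^ ((p - 2) / 2) * x)| ^ γ * (|x| ^ ((p - 2) / 2) * x)
        = |x| ^ (p - 2) * x := by
      intro x
      rcases eq_or_ne x 0 with rfl | hx
      · simp
      · have hx0 : 0 < |x| := abs_pos.mpr hx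
        rw [habs x, ← Real.rpow_mul (abs_nonneg x),
          show p / 2 * γ = (p - 2) / 2 by rw [hγ]; field_simp,
          ← mul_assoc, ← Real.rpow_add hx0,
          show (p - 2) / 2 + (p - 2) / 2 = p - 2 by ring]
    have hkey := spd_key hγ0 hγ1 A B
    rw [hA, hB, hident a, hident b] at hkey
    set M : ℝ := max |a| |b| with hM
    have hM0 : 0 ≤ M := (abs_nonneg a).trans (le_max_left _ _)
    set T : ℝ := |B - A| with hT
    have hT0 : 0 ≤ T := abs_nonneg _
    have hmaxAB : max |A| |B| ^ γ = M ^ ((p - 2) / 2) := by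
      have hmab : max |A| |B| = M ^ (p / 2) := by
        rw [hA, hB, habs a, habs b, hM]
        rcases le_total |a| |b| with h | h
        · rw [max_eq_right h,
            max_eq_right (Real.rpow_le_rpow (abs_nonneg a) h (by positivity))]
        · rw [max_eq_left h,
            max_eq_left (Real.rpow_le_rpow (abs_nonneg b) h (by positivity))]
      rw [hmab, ← Real.rpow_mul hM0, show p / 2 * γ = (p - 2) / 2 by rw [hγ]; field_simp]
    rw [hmaxAB] at hkey
    -- hkey : |inner| ≤ 2 * M ^ ((p-2)/2) * T
    have hXnn : 0 ≤ M ^ ((p - 2) / 2) * T := by positivity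
    have step1 : |(|b| ^ (p - 2) * b - |a| ^ (p - 2) * a)| ^ q
        ≤ 2 ^ q * (M ^ ((p - 2) / 2) * T) ^ q := by
      calc |(|b| ^ (p - 2) * b - |a| ^ (p - 2) * a)| ^ q
          ≤ (2 * M ^ ((p - 2) / 2) * T) ^ q :=
            Real.rpow_le_rpow (abs_nonneg _) hkey hq0.le
        _ = 2 ^ q * (M ^ ((p - 2) / 2) * T) ^ q := by
            rw [mul_assoc, Real.mul_rpow (by norm_num) hXnn]
    have h2q : (2:ℝ) ^ q ≤ 4 := by
      calc (2:ℝ) ^ q ≤ 2 ^ (2:ℝ) :=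
            Real.rpow_le_rpow_of_exponent_le (by norm_num) hq2lt.le
        _ = 4 := by
            rw [show (2:ℝ) = ((2:ℕ):ℝ) by norm_num, Real.rpow_natCast]; norm_num
    set e : ℝ := ε ^ ((1:ℝ)/2) with he
    have he0 : 0 < e := Real.rpow_pos_of_pos hε _
    have h2mq : (0:ℝ) < 2 - q := by linarith
    have hconj : (2/q).HolderConjugate (2/(2-q)) := by
      rw [Real.holderConjugate_iff]
      constructor
      · rw [lt_div_iff₀ hq0]; linarith
      · rw [inv_div, inv_div]; field_simp; ring
    have hXnn' : 0 ≤ e * T := by positivity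
    have hYnn : 0 ≤ M ^ ((p - 2) / 2) / e := by positivity
    have hy := Real.young_inequality_of_nonneg
      (Real.rpow_nonneg hXnn' q) (Real.rpow_nonneg hYnn q) hconj
    have id1 : (e * T) ^ q * (M ^ ((p - 2) / 2) / e) ^ q = (M ^ ((p - 2) / 2) * T) ^ q := by
      rw [← Real.mul_rpow hXnn' hYnn]
      congr 1
      field_simp
    have id2 : ((e * T) ^ q) ^ (2/q) = ε * T ^ 2 := by
      rw [← Real.rpow_mul hXnn', show q * (2/q) = 2 by field_simp,
        Real.mul_rpow he0.le hT0, he, ← Real.rpow_mul hε.le,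
        show (1:ℝ)/2 * 2 = 1 by norm_num, Real.rpow_one,
        show (2:ℝ) = ((2:ℕ):ℝ) by norm_num, Real.rpow_natCast]
    have hqs' : q * (2/(2-q)) = 2 * p / (p - 2) := by
      rw [hq]
      have h1 : (2:ℝ) - p / (p - 1) = (p - 2) / (p - 1) := by field_simp; ring
      rw [h1]
      field_simp
    have id3 : ((M ^ ((p - 2) / 2) / e) ^ q) ^ (2/(2-q))
        = ε ^ (-(p/(p-2))) * M ^ p := by
      rw [← Real.rpow_mul hYnn, hqs',
        Real.div_rpow (Real.rpow_nonneg hM0 _) he0.le _,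
        ← Real.rpow_mul hM0, show (p-2)/2 * (2*p/(p-2)) = p by field_simp,
        he, ← Real.rpow_mul hε.le, show (1:ℝ)/2 * (2*p/(p-2)) = p/(p-2) by field_simp,
        Real.rpow_neg hε.le]
      ring
    have hs1 : (1:ℝ) ≤ 2/q := by rw [le_div_iff₀ hq0]; linarith
    have hs2 : (1:ℝ) ≤ 2/(2-q) := by rw [le_div_iff₀ h2mq]; linarith
    have hy2 : (M ^ ((p - 2) / 2) * T) ^ q ≤ ε * T ^ 2 + ε ^ (-(p/(p-2))) * M ^ p := by
      calc (M ^ ((p - 2) / 2) * T) ^ q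
          = (e * T) ^ q * (M ^ ((p - 2) / 2) / e) ^ q := id1.symm
        _ ≤ ((e * T) ^ q) ^ (2/q) / (2/q)
            + ((M ^ ((p - 2) / 2) / e) ^ q) ^ (2/(2-q)) / (2/(2-q)) := hy
        _ ≤ ((e * T) ^ q) ^ (2/q) + ((M ^ ((p - 2) / 2) / e) ^ q) ^ (2/(2-q)) :=
            add_le_add
              (div_le_self (Real.rpow_nonneg (Real.rpow_nonneg hXnn' q) _) hs1)
              (div_le_self (Real.rpow_nonneg (Real.rpow_nonneg hYnn q) _) hs2)
        _ = ε * T ^ 2 + ε ^ (-(p/(p-2))) * M ^ p := by rw [id2, id3]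
    have hMp : M ^ p ≤ |b| ^ p + |a| ^ p := by
      rcases le_total |a| |b| with h | h
      · rw [hM, max_eq_right h]
        linarith [Real.rpow_nonneg (abs_nonneg a) p]
      · rw [hM, max_eq_left h]
        linarith [Real.rpow_nonneg (abs_nonneg b) p]
    calc |(|b| ^ (p - 2) * b - |a| ^ (p - 2) * a)| ^ q
        ≤ 2 ^ q * (M ^ ((p - 2) / 2) * T) ^ q := step1
      _ ≤ 4 * (M ^ ((p - 2) / 2) * T) ^ q :=
          mul_le_mul_of_nonneg_right h2q (Real.rpow_nonneg hXnn q)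
      _ ≤ 4 * (ε * T ^ 2 + ε ^ (-(p/(p-2))) * M ^ p) := by
          have := mul_le_mul_of_nonneg_left hy2 (by norm_num : (0:ℝ) ≤ 4)
          linarith
      _ ≤ 4 * (ε * T ^ 2 + ε ^ (-(p/(p-2))) * (|b| ^ p + |a| ^ p)) := by
          gcongr
end

section
/- Let p ≥ 2 and let u : ℝ → ℝ be differentiable. Define v(t) = |u(t)|^{(p-2)/2} u(t). If v is differentiable at t, then the function w(t) = |u(t)|^{p-2} u(t) is differentiable at t and w'(t) = (2(p−1)/p) · |u(t)|^{(p-2)/2} · v'(t). -/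
lemma hasDerivAt_abs_rpow_mul_self {q : ℝ} (hq : 0 ≤ q) (a : ℝ) :
    HasDerivAt (fun x : ℝ => |x| ^ q * x) ((q + 1) * |a| ^ q) a := by
  rcases eq_or_lt_of_le hq with hq0 | hqpos
  · subst hq0
    simp only [Real.rpow_zero, one_mul, zero_add]
    exact hasDerivAt_id a
  rcases lt_trichotomy a 0 with hneg | hzero | hpos
  · -- a < 0 : f x = -((-x)^(q+1)) near a
    have h1 : HasDerivAt (fun x : ℝ => (-x) ^ (q + 1)) (-((q + 1) * (-a) ^ q)) a := by
      have hbase : (-a : ℝ) ≠ 0 := ne_of_gt (by linarith)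
      have h2 := Real.hasDerivAt_rpow_const (x := -a) (p := q + 1) (Or.inl hbase)
      have h3 : HasDerivAt (fun x : ℝ => -x) (-1) a := (hasDerivAt_id a).neg
      have := h2.comp a h3
      simpa [add_sub_cancel_right, mul_comm, Function.comp_def] using this
    have h4 : HasDerivAt (fun x : ℝ => -((-x) ^ (q + 1))) ((q + 1) * (-a) ^ q) a := by
      simpa [Pi.neg_def] using h1.neg
    have heq : (fun x : ℝ => -((-x) ^ (q + 1))) =ᶠ[nhds a] fun x => |x| ^ q * x := by
      filter_upwards [eventually_lt_nhds hneg] with x hx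
      have hx' : (0:ℝ) ≤ -x := by linarith
      rw [abs_of_neg hx, Real.rpow_add_of_nonneg hx' hq zero_le_one, Real.rpow_one]
      ring
    have := h4.congr_of_eventuallyEq heq.symm
    simpa [abs_of_neg hneg] using this
  · -- a = 0
    subst hzero
    have hq' : |(0:ℝ)| ^ q = 0 := by
      simp [Real.zero_rpow (ne_of_gt hqpos)]
    rw [hasDerivAt_iff_tendsto_slope]
    have hcont : Filter.Tendsto (fun x : ℝ => |x| ^ q) (nhds 0) (nhds 0) := by
      have : Filter.Tendsto (fun x : ℝ => |x| ^ q) (nhds 0) (nhds (|(0:ℝ)| ^ q)) := by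
        apply Filter.Tendsto.rpow_const
        · exact continuous_abs.continuousAt
        · right; exact hq
      simpa [Real.zero_rpow (ne_of_gt hqpos)] using this
    have : Filter.Tendsto (fun x : ℝ => |x| ^ q) (nhdsWithin 0 {(0:ℝ)}ᶜ) (nhds 0) :=
      hcont.mono_left nhdsWithin_le_nhds
    rw [hq', mul_zero]
    refine this.congr' ?_
    filter_upwards [self_mem_nhdsWithin] with x hx
    have hx0 : x ≠ 0 := hx
    simp [slope_def_field, hq']
    field_simp
  · -- a > 0 : f x = x^(q+1) near a
    have h1 : HasDerivAt (fun x : ℝ => x ^ (q + 1)) ((q + 1) * a ^ q) a := by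
      have := Real.hasDerivAt_rpow_const (x := a) (p := q + 1) (Or.inl (ne_of_gt hpos))
      simpa [add_sub_cancel_right] using this
    have heq : (fun x : ℝ => x ^ (q + 1)) =ᶠ[nhds a] fun x => |x| ^ q * x := by
      filter_upwards [eventually_gt_nhds hpos] with x hx
      rw [abs_of_pos hx, Real.rpow_add_of_nonneg hx.le hq zero_le_one, Real.rpow_one]
    have := h1.congr_of_eventuallyEq heq.symm
    simpa [abs_of_pos hpos] using this

/-- Chain rule: if `u` is differentiable and `v = |u|^{(p-2)/2} u` is differentiable at `t`, then
`w = |u|^{p-2} u` is differentiable at `t` with `w'(t) = (2(p−1)/p) |u(t)|^{(p-2)/2} v'(t)`. -/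
theorem signed_power_chain_rule (p : ℝ) (hp : 2 ≤ p) (u v : ℝ → ℝ)
    (hu : Differentiable ℝ u) (hv : ∀ t, v t = |u t| ^ ((p - 2) / 2) * u t) (t : ℝ)
    (hvt : DifferentiableAt ℝ v t) :
    HasDerivAt (fun s => |u s| ^ (p - 2) * u s)
      ((2 * (p - 1) / p) * |u t| ^ ((p - 2) / 2) * deriv v t) t := by
  have hp0 : (0:ℝ) < p := by linarith
  set q : ℝ := (p - 2) / p with hqdef
  have hq : 0 ≤ q := div_nonneg (by linarith) hp0.le
  have habs : ∀ s, |v s| ^ q = |u s| ^ ((p - 2) / 2) := by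
    intro s
    have h1 : |v s| = |u s| ^ (p / 2) := by
      have hadd := Real.rpow_add_of_nonneg (abs_nonneg (u s))
        (show (0:ℝ) ≤ (p - 2) / 2 by linarith) zero_le_one
      rw [Real.rpow_one] at hadd
      rw [hv s, abs_mul, abs_of_nonneg (Real.rpow_nonneg (abs_nonneg _) _), ← hadd]
      congr 1
      ring
    rw [h1, ← Real.rpow_mul (abs_nonneg _)]
    congr 1
    rw [hqdef, div_mul_div_comm, mul_comm 2 p, mul_div_mul_left _ _ hp0.ne']
  have hfun : ∀ s, |u s| ^ (p - 2) * u s = |v s| ^ q * v s := by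
    intro s
    rw [habs s, hv s, ← mul_assoc,
      ← Real.rpow_add_of_nonneg (abs_nonneg _) (by linarith) (by linarith)]
    ring_nf
  have key := (hasDerivAt_abs_rpow_mul_self hq (v t)).comp t hvt.hasDerivAt
  have hfun' : (fun s => |u s| ^ (p - 2) * u s) = fun s => |v s| ^ q * v s :=
    funext hfun
  rw [hfun']
  have hval : (2 * (p - 1) / p) * |u t| ^ ((p - 2) / 2) * deriv v t
      = (q + 1) * |v t| ^ q * deriv v t := by
    have hq1 : q + 1 = 2 * (p - 1) / p := by
      rw [hqdef]; field_simp; ring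
    rw [habs t, hq1]
  rw [hval]
  exact key
end
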